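/- Let n, m ≥ 1. Let Λ be an n×n real diagonal matrix with strictly positive diagonal entries, let H and R be n×n real matrices, B an n×m real matrix, K an m×n real matrix, and let μ > 0 satisfy e^{−μ} λ_max(Λ) λ_max(H Λ⁻¹ Hᵀ + I) ≤ 1, where λ_max(Λ) is the largest diagonal entry of Λ and λ_max(H Λ⁻¹ Hᵀ + I) is the largest eigenvalue of the symmetric positive definite matrix H Λ⁻¹ Hᵀ + I. Then there exists a constant C > 0 such that for every continuously differentiable ψ : [0,1] → ℝⁿ and every θ ∈ ℝⁿ with ψ(1) = e^{−μ} Λ⁻¹ Hᵀ Λ ψ(0), one has: ∫₀¹ (ψ′(z) + μ ψ(z))ᵀ Λ ψ(z) e^{μ(z−1)} dz + θᵀ (e^{−μ} Kᵀ Bᵀ Λ ψ(0) + Rᵀ θ) ≤ C · (∫₀¹ |ψ(z)|² e^{μ(z−1)} dz + |θ|²). -/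

import Mathlib

open Matrix Set Real

private lemma euclid_coord_le {k : ℕ} (x : EuclideanSpace ℝ (Fin k)) (i : Fin k) : |x i| ≤ ‖x‖ := by
  rw [EuclideanSpace.norm_eq]
  rw [← Real.sqrt_sq_eq_abs]
  apply Real.sqrt_le_sqrt
  simpa [Real.norm_eq_abs, sq_abs] using
    Finset.single_le_sum (f := fun j => x j ^ 2) (fun j _ => sq_nonneg _) (Finset.mem_univ i)

private lemma euclid_norm_sq {k : ℕ} (x : EuclideanSpace ℝ (Fin k)) : ‖x‖ ^ 2 = ∑ i, x i ^ 2 := by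
  rw [EuclideanSpace.norm_eq, Real.sq_sqrt (by positivity)]
  simp [Real.norm_eq_abs, sq_abs]

private lemma dot_mulVec_le {k l : ℕ} (A : Matrix (Fin k) (Fin l) ℝ)
    (x : EuclideanSpace ℝ (Fin k)) (y : EuclideanSpace ℝ (Fin l)) :
    x ⬝ᵥ A.mulVec y ≤ (∑ i, ∑ j, |A i j|) * (‖x‖ * ‖y‖) := by
  have h : x ⬝ᵥ A.mulVec y = ∑ i, ∑ j, x i * (A i j * y j) := by
    simp [dotProduct, Matrix.mulVec, Finset.mul_sum]
  rw [h, Finset.sum_mul]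
  refine Finset.sum_le_sum fun i _ => ?_
  rw [Finset.sum_mul]
  refine Finset.sum_le_sum fun j _ => ?_
  have h1 := euclid_coord_le x i
  have h2 := euclid_coord_le y j
  have h3 : x i * (A i j * y j) ≤ |x i| * (|A i j| * |y j|) := by
    rw [← abs_mul, ← abs_mul]; exact le_abs_self _
  have h4 : |x i| * (|A i j| * |y j|) ≤ ‖x‖ * (|A i j| * ‖y‖) := by
    have hx : (0:ℝ) ≤ ‖x‖ := norm_nonneg _
    have hy : (0:ℝ) ≤ |y j| := abs_nonneg _
    have ha : (0:ℝ) ≤ |A i j| := abs_nonneg _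
    calc |x i| * (|A i j| * |y j|) ≤ ‖x‖ * (|A i j| * |y j|) :=
          mul_le_mul_of_nonneg_right h1 (by positivity)
      _ ≤ ‖x‖ * (|A i j| * ‖y‖) := by
          apply mul_le_mul_of_nonneg_left _ hx
          exact mul_le_mul_of_nonneg_left h2 ha
  calc x i * (A i j * y j) ≤ ‖x‖ * (|A i j| * ‖y‖) := h3.trans h4
    _ = |A i j| * (‖x‖ * ‖y‖) := by ring


set_option maxHeartbeats 1000000 in
/-- (Step 2 of the proof of Lemma 1 of the paper: quasi-dissipativity of the
adjoint operator `A*(ψ,θ) = (Λ(μψ + ψ_z), KᵀBᵀΛD(0)ψ(0) + Rᵀθ)` with `D(0) = e^{-μ} I`, on its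
domain `ψ(1) = e^{-μ} Λ⁻¹ Hᵀ Λ ψ(0)`, with respect to the weighted inner product
`⟨(φ,η),(ψ,θ)⟩_μ = ∫₀¹ φᵀψ e^{μ(z-1)} dz + θᵀη`, for `μ` large enough.
The spectral condition `e^{-μ} λ_max(Λ) λ_max(H Λ⁻¹ Hᵀ + I) ≤ 1` is expressed equivalently in
the Loewner order as `e^{-μ} λ_max(Λ) (H Λ⁻¹ Hᵀ + I) ⪯ I`. -/
theorem stmt_13 (n m : ℕ) (hn : 1 ≤ n) (hm : 1 ≤ m)
    (lvec : Fin n → ℝ) (hl : ∀ i, 0 < lvec i)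
    (Λ : Matrix (Fin n) (Fin n) ℝ) (hΛ : Λ = Matrix.diagonal lvec)
    (H R : Matrix (Fin n) (Fin n) ℝ) (B : Matrix (Fin n) (Fin m) ℝ)
    (K : Matrix (Fin m) (Fin n) ℝ)
    (μ : ℝ) (hμ : 0 < μ)
    (hμcond : ((1 : Matrix (Fin n) (Fin n) ℝ) -
      (Real.exp (-μ) * (⨆ i, lvec i)) • (H * Λ⁻¹ * Hᵀ + 1)).PosSemidef) :
    ∃ C > (0:ℝ), ∀ (ψ ψ' : ℝ → EuclideanSpace ℝ (Fin n)) (θ : EuclideanSpace ℝ (Fin n)),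
      (∀ z ∈ Set.Icc (0:ℝ) 1, HasDerivWithinAt ψ (ψ' z) (Set.Icc (0:ℝ) 1) z) →
      ContinuousOn ψ' (Set.Icc (0:ℝ) 1) →
      ψ 1 = Real.exp (-μ) • (Λ⁻¹ * Hᵀ * Λ).mulVec (ψ 0) →
      (∫ z in (0:ℝ)..1, ((ψ' z + μ • ψ z) ⬝ᵥ Λ.mulVec (ψ z)) * Real.exp (μ * (z - 1))) +
          θ ⬝ᵥ (Real.exp (-μ) • (Kᵀ * Bᵀ * Λ).mulVec (ψ 0) + Rᵀ.mulVec θ) ≤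
        C * ((∫ z in (0:ℝ)..1, ‖ψ z‖ ^ 2 * Real.exp (μ * (z - 1))) + ‖θ‖ ^ 2) := by
  have hne : Nonempty (Fin n) := ⟨⟨0, hn⟩⟩
  set lmax : ℝ := ⨆ i, lvec i with hlmaxdef
  have hbdd : BddAbove (Set.range lvec) := (Set.finite_range lvec).bddAbove
  have hle : ∀ i, lvec i ≤ lmax := fun i => le_ciSup hbdd i
  have hlmax : 0 < lmax := lt_of_lt_of_le (hl hne.some) (hle hne.some)
  obtain ⟨imin, himin⟩ := Finite.exists_min lvec
  set lmin : ℝ := lvec imin with hlmindef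
  have hlmin : 0 < lmin := hl imin
  set M : Matrix (Fin n) (Fin n) ℝ := Kᵀ * Bᵀ * Λ with hM
  set SM : ℝ := ∑ i, ∑ j, |M i j| with hSM
  set SR : ℝ := ∑ i, ∑ j, |Rᵀ i j| with hSR
  have hSMnn : 0 ≤ SM := Finset.sum_nonneg fun i _ => Finset.sum_nonneg fun j _ => abs_nonneg _
  have hSRnn : 0 ≤ SR := Finset.sum_nonneg fun i _ => Finset.sum_nonneg fun j _ => abs_nonneg _
  set ε : ℝ := Real.exp (-(2*μ)) * lmin ^ 2 / 2 with hε
  have hεpos : 0 < ε := by positivity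
  refine ⟨μ * lmax / 2 + (Real.exp (-μ) * SM) ^ 2 / (4 * ε) + SR + 1, by positivity, ?_⟩
  intro ψ ψ' θ hψ hψ' hbc
  -- coordinates
  set e : ℝ → ℝ := fun z => Real.exp (μ * (z - 1)) with he
  set g : ℝ → ℝ := fun z => ∑ i, lvec i * (ψ z i) ^ 2 with hg
  set g' : ℝ → ℝ := fun z => ∑ i, lvec i * (2 * ψ z i * ψ' z i) with hg'
  set F : ℝ → ℝ := fun z => g z * e z with hF
  set F' : ℝ → ℝ := fun z => g' z * e z + g z * (μ * e z) with hF'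
  have hco : ∀ (i : Fin n), ∀ z ∈ Set.Icc (0:ℝ) 1,
      HasDerivWithinAt (fun t => ψ t i) (ψ' z i) (Set.Icc (0:ℝ) 1) z := by
    intro i z hz
    exact ((EuclideanSpace.proj i).hasFDerivAt.comp_hasDerivWithinAt z (hψ z hz))
  have hcocont : ∀ (i : Fin n), ContinuousOn (fun t => ψ t i) (Set.Icc (0:ℝ) 1) :=
    fun i z hz => ((hco i z hz).continuousWithinAt)
  have hcocont' : ∀ (i : Fin n), ContinuousOn (fun t => ψ' t i) (Set.Icc (0:ℝ) 1) :=
    fun i => ((EuclideanSpace.proj i).continuous.comp_continuousOn hψ')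
  have hecont : Continuous e := by fun_prop
  have hgD : ∀ z ∈ Set.Icc (0:ℝ) 1, HasDerivWithinAt g (g' z) (Set.Icc (0:ℝ) 1) z := by
    intro z hz
    refine HasDerivWithinAt.fun_sum fun i _ => ?_
    have := ((hco i z hz).pow 2).const_mul (lvec i)
    simpa [mul_comm, mul_assoc, mul_left_comm] using this
  have heD : ∀ z : ℝ, HasDerivAt e (μ * e z) z := by
    intro z
    have h1 : HasDerivAt (fun t : ℝ => μ * (t - 1)) μ z := by
      simpa using ((hasDerivAt_id z).sub_const 1).const_mul μ
    simpa [he, mul_comm] using h1.exp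
  have hFD : ∀ z ∈ Set.Icc (0:ℝ) 1, HasDerivWithinAt F (F' z) (Set.Icc (0:ℝ) 1) z := by
    intro z hz
    exact (hgD z hz).mul (heD z).hasDerivWithinAt
  have hIcc : Set.uIcc (0:ℝ) 1 = Set.Icc 0 1 := Set.uIcc_of_le zero_le_one
  have hgcont : ContinuousOn g (Set.Icc (0:ℝ) 1) := fun z hz => (hgD z hz).continuousWithinAt
  have hg'cont : ContinuousOn g' (Set.Icc (0:ℝ) 1) := by
    apply continuousOn_finset_sum
    intro i _
    exact continuousOn_const.mul ((continuousOn_const.mul (hcocont i)).mul (hcocont' i))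
  have hF'cont : ContinuousOn F' (Set.Icc (0:ℝ) 1) :=
    (hg'cont.mul hecont.continuousOn).add (hgcont.mul (continuousOn_const.mul hecont.continuousOn))
  have hF'int : IntervalIntegrable F' MeasureTheory.volume 0 1 :=
    (hIcc ▸ hF'cont).intervalIntegrable
  have hgecont : ContinuousOn (fun z => g z * e z) (Set.Icc (0:ℝ) 1) :=
    hgcont.mul hecont.continuousOn
  have hgeint : IntervalIntegrable (fun z => g z * e z) MeasureTheory.volume 0 1 :=
    (hIcc ▸ hgecont).intervalIntegrable
  have hFTC : ∫ z in (0:ℝ)..1, F' z = F 1 - F 0 := by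
    apply intervalIntegral.integral_eq_sub_of_hasDeriv_right_of_le zero_le_one
      (fun z hz => (hFD z hz).continuousWithinAt)
      (fun z hz => (hFD z (Set.Ioo_subset_Icc_self hz)).mono_of_mem_nhdsWithin
        (Icc_mem_nhdsGT_of_mem ⟨hz.1.le, hz.2⟩))
      hF'int
  have hkey : ∀ z : ℝ, ((ψ' z + μ • ψ z) ⬝ᵥ Λ.mulVec (ψ z)) * e z
      = (1/2) * F' z + (μ/2) * (g z * e z) := by
    intro z
    have l1 : ((ψ' z + μ • ψ z) ⬝ᵥ Λ.mulVec (ψ z))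
        = ∑ i, (ψ' z i + μ * ψ z i) * (lvec i * ψ z i) := by
      simp [hΛ, dotProduct, Matrix.mulVec_diagonal]
    rw [l1]
    simp only [hF', hg', hg, Finset.sum_mul, Finset.mul_sum, mul_add, ← Finset.sum_add_distrib]
    exact Finset.sum_congr rfl fun i _ => by ring
  have hsplit : (∫ z in (0:ℝ)..1, ((ψ' z + μ • ψ z) ⬝ᵥ Λ.mulVec (ψ z)) * Real.exp (μ * (z - 1)))
      = (1/2) * (F 1 - F 0) + (μ/2) * ∫ z in (0:ℝ)..1, g z * e z := by
    have heq : (fun z => ((ψ' z + μ • ψ z) ⬝ᵥ Λ.mulVec (ψ z)) * Real.exp (μ * (z - 1)))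
        = fun z => (1/2) * F' z + (μ/2) * (g z * e z) := funext fun z => hkey z
    rw [intervalIntegral.integral_congr (g := fun z => (1/2) * F' z + (μ/2) * (g z * e z))
      (fun z _ => hkey z),
      intervalIntegral.integral_add (hF'int.const_mul _) (hgeint.const_mul _),
      intervalIntegral.integral_const_mul, intervalIntegral.integral_const_mul, hFTC]
  have hψcont : ContinuousOn ψ (Set.Icc (0:ℝ) 1) := fun z hz => (hψ z hz).continuousWithinAt
  have hψsqcont : ContinuousOn (fun z => ‖ψ z‖ ^ 2 * e z) (Set.Icc (0:ℝ) 1) :=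
    ((hψcont.norm.pow 2).mul hecont.continuousOn)
  have hψsqint : IntervalIntegrable (fun z => ‖ψ z‖ ^ 2 * e z) MeasureTheory.volume 0 1 :=
    (hIcc ▸ hψsqcont).intervalIntegrable
  have hnormsq : ∀ x : EuclideanSpace ℝ (Fin n), ‖x‖ ^ 2 = ∑ i, x i ^ 2 :=
    fun x => euclid_norm_sq x
  have hmono : (∫ z in (0:ℝ)..1, g z * e z)
      ≤ lmax * ∫ z in (0:ℝ)..1, ‖ψ z‖ ^ 2 * e z := by
    rw [← intervalIntegral.integral_const_mul]
    apply intervalIntegral.integral_mono_on zero_le_one hgeint (hψsqint.const_mul _)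
    intro z _
    have h1 : g z ≤ lmax * ‖ψ z‖ ^ 2 := by
      rw [hnormsq, Finset.mul_sum]
      exact Finset.sum_le_sum fun i _ => mul_le_mul_of_nonneg_right (hle i) (sq_nonneg _)
    have hez : (0:ℝ) < e z := Real.exp_pos _
    calc g z * e z ≤ (lmax * ‖ψ z‖ ^ 2) * e z := mul_le_mul_of_nonneg_right h1 hez.le
      _ = lmax * (‖ψ z‖ ^ 2 * e z) := by ring
  have hIψnn : (0:ℝ) ≤ ∫ z in (0:ℝ)..1, ‖ψ z‖ ^ 2 * e z := by
    apply intervalIntegral.integral_nonneg zero_le_one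
    intro z _
    positivity
  -- boundary analysis
  set v : Fin n → ℝ := fun i => lvec i * ψ 0 i with hv
  set w : Fin n → ℝ := Hᵀ.mulVec v with hw
  have hLinv : Λ⁻¹ = Matrix.diagonal (fun i => (lvec i)⁻¹) := by
    apply Matrix.inv_eq_right_inv
    rw [hΛ, Matrix.diagonal_mul_diagonal]
    rw [show (fun i => lvec i * (lvec i)⁻¹) = fun _ => (1:ℝ) from
      funext fun i => mul_inv_cancel₀ (hl i).ne']
    exact Matrix.diagonal_one
  have hΛv : Λ *ᵥ (ψ 0 : Fin n → ℝ) = v := by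
    ext i; simp [hΛ, Matrix.mulVec_diagonal, hv]
  have hψ1 : ∀ i, ψ 1 i = Real.exp (-μ) * ((lvec i)⁻¹ * w i) := by
    intro i
    have hmv : (Λ⁻¹ * Hᵀ * Λ) *ᵥ (ψ 0 : Fin n → ℝ) = Λ⁻¹ *ᵥ w := by
      rw [← Matrix.mulVec_mulVec, ← Matrix.mulVec_mulVec, hΛv, hw]
    have : ψ 1 i = Real.exp (-μ) * ((Λ⁻¹ * Hᵀ * Λ) *ᵥ (ψ 0 : Fin n → ℝ)) i := by
      rw [hbc]; rfl
    rw [this, hmv, hLinv]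
    simp [Matrix.mulVec_diagonal]
  have hexp2 : Real.exp (-(2*μ)) = Real.exp (-μ) * Real.exp (-μ) := by
    rw [← Real.exp_add]; ring_nf
  have hg1 : g 1 = Real.exp (-(2*μ)) * ∑ i, (lvec i)⁻¹ * w i ^ 2 := by
    simp only [hg]
    rw [Finset.mul_sum]
    refine Finset.sum_congr rfl fun i _ => ?_
    rw [hψ1 i, hexp2]
    have hli := (hl i).ne'
    field_simp
  have hg0 : g 0 = ∑ i, (lvec i)⁻¹ * v i ^ 2 := by
    simp only [hg, hv]
    refine Finset.sum_congr rfl fun i _ => ?_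
    have hli := (hl i).ne'
    field_simp
  have hq : v ⬝ᵥ (H * Λ⁻¹ * Hᵀ) *ᵥ v = ∑ i, (lvec i)⁻¹ * w i ^ 2 := by
    rw [← Matrix.mulVec_mulVec, ← Matrix.mulVec_mulVec, Matrix.dotProduct_mulVec]
    rw [show v ᵥ* H = w from by rw [hw, Matrix.mulVec_transpose]]
    rw [hLinv]
    simp only [dotProduct, Matrix.mulVec_diagonal]
    exact Finset.sum_congr rfl fun i _ => by ring
  have hvv : v ⬝ᵥ v = ∑ i, v i ^ 2 := by simp [dotProduct, sq]
  have hpsd := hμcond.dotProduct_mulVec_nonneg v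
  have hpsd' : 0 ≤ (∑ i, v i ^ 2) - Real.exp (-μ) * lmax *
      ((∑ i, (lvec i)⁻¹ * w i ^ 2) + ∑ i, v i ^ 2) := by
    rw [star_trivial] at hpsd
    simp only [Matrix.sub_mulVec, Matrix.smul_mulVec, Matrix.add_mulVec,
      Matrix.one_mulVec, dotProduct_sub, dotProduct_smul, dotProduct_add,
      smul_eq_mul] at hpsd
    rw [hq, hvv] at hpsd
    linarith [hpsd]
  set S : ℝ := ∑ i, v i ^ 2 with hS
  set Q : ℝ := ∑ i, (lvec i)⁻¹ * w i ^ 2 with hQ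
  have hq2 : Real.exp (-μ) * Q ≤ lmax⁻¹ * S - Real.exp (-μ) * S := by
    have h2 : Real.exp (-μ) * lmax * (Q + S) ≤ S := by linarith [hpsd']
    have h3 : lmax⁻¹ * lmax = 1 := inv_mul_cancel₀ hlmax.ne'
    have h4 := mul_le_mul_of_nonneg_left h2 (inv_nonneg.2 hlmax.le)
    have h5 : lmax⁻¹ * (Real.exp (-μ) * lmax * (Q + S))
        = Real.exp (-μ) * Q + Real.exp (-μ) * S := by
      field_simp
    linarith [h4, h5.le, h5.ge]
  have he1 : e 1 = 1 := by simp [he]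
  have he0 : e 0 = Real.exp (-μ) := by
    show Real.exp (μ * (0 - 1)) = Real.exp (-μ)
    congr 1; ring
  have hFsub : F 1 - F 0 = Real.exp (-(2*μ)) * Q - Real.exp (-μ) * g 0 := by
    simp only [hF]
    rw [he1, he0, hg1]
    ring
  have hg0ge : lmax⁻¹ * S ≤ g 0 := by
    rw [hg0, hS, Finset.mul_sum]
    exact Finset.sum_le_sum fun i _ =>
      mul_le_mul_of_nonneg_right (inv_anti₀ (hl i) (hle i)) (sq_nonneg _)
  have hbdry : F 1 - F 0 ≤ -(Real.exp (-(2*μ)) * S) := by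
    rw [hFsub, hexp2]
    have hE := Real.exp_pos (-μ)
    have t1 : Real.exp (-μ) * (Real.exp (-μ) * Q)
        ≤ Real.exp (-μ) * (lmax⁻¹ * S - Real.exp (-μ) * S) :=
      mul_le_mul_of_nonneg_left hq2 hE.le
    have t2 : Real.exp (-μ) * (lmax⁻¹ * S) ≤ Real.exp (-μ) * g 0 :=
      mul_le_mul_of_nonneg_left hg0ge hE.le
    linarith [t1, t2]
  have hvS : lmin ^ 2 * ‖ψ 0‖ ^ 2 ≤ S := by
    rw [hS, hnormsq, Finset.mul_sum]
    refine Finset.sum_le_sum fun i _ => ?_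
    have h1 : lmin ≤ lvec i := himin i
    simp only [hv]
    have h2 : lmin ^ 2 ≤ lvec i ^ 2 := pow_le_pow_left₀ hlmin.le h1 2
    calc lmin ^ 2 * ψ 0 i ^ 2 ≤ lvec i ^ 2 * ψ 0 i ^ 2 :=
          mul_le_mul_of_nonneg_right h2 (sq_nonneg _)
      _ = (lvec i * ψ 0 i) ^ 2 := by ring
  have hbd2 : F 1 - F 0 ≤ -(2 * ε * ‖ψ 0‖ ^ 2) := by
    have hEE := (Real.exp_pos (-(2*μ))).le
    have : Real.exp (-(2*μ)) * (lmin ^ 2 * ‖ψ 0‖ ^ 2) ≤ Real.exp (-(2*μ)) * S :=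
      mul_le_mul_of_nonneg_left hvS hEE
    rw [hε]
    linarith [hbdry, this]
  -- theta term
  have hθexp : θ ⬝ᵥ (Real.exp (-μ) • (Kᵀ * Bᵀ * Λ).mulVec (ψ 0) + Rᵀ.mulVec θ)
      = Real.exp (-μ) * (θ ⬝ᵥ M.mulVec (ψ 0)) + θ ⬝ᵥ Rᵀ.mulVec θ := by
    rw [dotProduct_add, dotProduct_smul, smul_eq_mul, hM]
  have ht1 : θ ⬝ᵥ M.mulVec (ψ 0) ≤ SM * (‖θ‖ * ‖ψ 0‖) := dot_mulVec_le M θ (ψ 0)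
  have ht2 : θ ⬝ᵥ Rᵀ.mulVec θ ≤ SR * (‖θ‖ * ‖θ‖) := dot_mulVec_le Rᵀ θ θ
  have hEpos := Real.exp_pos (-μ)
  have hyoung : Real.exp (-μ) * (SM * (‖θ‖ * ‖ψ 0‖))
      ≤ ε * ‖ψ 0‖ ^ 2 + (Real.exp (-μ) * SM) ^ 2 / (4 * ε) * ‖θ‖ ^ 2 := by
    have key : ε * ‖ψ 0‖ ^ 2 + (Real.exp (-μ) * SM) ^ 2 / (4 * ε) * ‖θ‖ ^ 2
        - Real.exp (-μ) * (SM * (‖θ‖ * ‖ψ 0‖))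
        = (2 * ε * ‖ψ 0‖ - Real.exp (-μ) * SM * ‖θ‖) ^ 2 / (4 * ε) := by
      field_simp
      ring
    have hnn : (0:ℝ) ≤ (2 * ε * ‖ψ 0‖ - Real.exp (-μ) * SM * ‖θ‖) ^ 2 / (4 * ε) := by
      positivity
    linarith only [key, hnn]
  have hθbd : θ ⬝ᵥ (Real.exp (-μ) • (Kᵀ * Bᵀ * Λ).mulVec (ψ 0) + Rᵀ.mulVec θ)
      ≤ ε * ‖ψ 0‖ ^ 2 + ((Real.exp (-μ) * SM) ^ 2 / (4 * ε) + SR) * ‖θ‖ ^ 2 := by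
    rw [hθexp]
    have l1 : Real.exp (-μ) * (θ ⬝ᵥ M.mulVec (ψ 0))
        ≤ Real.exp (-μ) * (SM * (‖θ‖ * ‖ψ 0‖)) :=
      mul_le_mul_of_nonneg_left ht1 hEpos.le
    have l2 : SR * (‖θ‖ * ‖θ‖) = SR * ‖θ‖ ^ 2 := by ring
    linarith [l1, hyoung, ht2, l2.le, l2.ge]
  -- final assembly
  have hIeq : (∫ z in (0:ℝ)..1, ‖ψ z‖ ^ 2 * Real.exp (μ * (z - 1)))
      = ∫ z in (0:ℝ)..1, ‖ψ z‖ ^ 2 * e z := by simp only [he]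
  rw [hsplit, hIeq]
  set Iψ : ℝ := ∫ z in (0:ℝ)..1, ‖ψ z‖ ^ 2 * e z with hIψ
  set A : ℝ := ∫ z in (0:ℝ)..1, g z * e z with hA
  have hAle : μ / 2 * A ≤ μ / 2 * (lmax * Iψ) :=
    mul_le_mul_of_nonneg_left hmono (by positivity)
  have hc2 : (0:ℝ) ≤ (Real.exp (-μ) * SM) ^ 2 / (4 * ε) := by positivity
  have hT : (0:ℝ) ≤ ‖θ‖ ^ 2 := sq_nonneg _
  have h1 : 1/2 * (F 1 - F 0) ≤ -(ε * ‖ψ 0‖ ^ 2) := by linarith only [hbd2]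
  have hsum := add_le_add (add_le_add h1 hAle) hθbd
  refine le_trans hsum ?_
  have hrest : (0:ℝ) ≤ ((Real.exp (-μ) * SM) ^ 2 / (4 * ε) + SR + 1) * Iψ
      + (μ * lmax / 2 + 1) * ‖θ‖ ^ 2 :=
    add_nonneg (mul_nonneg (by linarith only [hc2, hSRnn]) hIψnn)
      (mul_nonneg (by positivity) hT)
  have hring : (μ * lmax / 2 + (Real.exp (-μ) * SM) ^ 2 / (4 * ε) + SR + 1) * (Iψ + ‖θ‖ ^ 2)
      = ((-(ε * ‖ψ 0‖ ^ 2) + μ / 2 * (lmax * Iψ))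
          + (ε * ‖ψ 0‖ ^ 2 + ((Real.exp (-μ) * SM) ^ 2 / (4 * ε) + SR) * ‖θ‖ ^ 2))
        + (((Real.exp (-μ) * SM) ^ 2 / (4 * ε) + SR + 1) * Iψ
          + (μ * lmax / 2 + 1) * ‖θ‖ ^ 2) := by ring
  linarith only [hrest, hring.le, hring.ge]
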